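/- Let ω be a majorant satisfying: there is M > 0 with δ∫_δ^π ω(t)/t² dt ≤ Mω(δ) for all δ ∈ (0,π]. If φ : 𝕋 → ℂ is continuous and satisfies |φ(ξ₁) - φ(ξ₂)| ≤ L·ω(|ξ₁ - ξ₂|) on 𝕋, then there is a constant M' > 0 (depending only on M and L) such that for every z ∈ 𝔻 with z ≠ 0, |φ(z/|z|) - P[φ](z)| ≤ M'·ω(1 - |z|). -/

import Mathlib

open Metric Real

def IsMajorant (ω : ℝ → ℝ) : Prop :=
  ContinuousOn ω (Set.Ici 0) ∧ MonotoneOn ω (Set.Ici 0) ∧ ω 0 = 0 ∧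
  ∀ s t : ℝ, 0 < s → s ≤ t → ω t / t ≤ ω s / s

/-- The Poisson integral of a (complex-valued) boundary function `φ`. -/
noncomputable def poissonC (φ : ℂ → ℂ) (z : ℂ) : ℂ :=
  (1 / (2 * π) : ℝ) •
    ∫ τ in (0:ℝ)..(2 * π),
      ((1 - ‖z‖ ^ 2) / ‖Complex.exp (τ * Complex.I) - z‖ ^ 2 : ℝ) •
        φ (Complex.exp (τ * Complex.I))


lemma nsq (z : ℂ) : ‖z‖^2 = z.re^2 + z.im^2 := by
  rw [Complex.sq_norm, Complex.normSq_apply]; ring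

lemma exp_tau_ne (z : ℂ) (hz : ‖z‖ < 1) (τ : ℝ) :
    Complex.exp (τ * Complex.I) - z ≠ 0 := by
  intro h
  have h1 : ‖Complex.exp ((τ:ℂ) * Complex.I)‖ = 1 := by
    simpa using Complex.abs_exp_ofReal_mul_I τ
  have : Complex.exp ((τ:ℂ) * Complex.I) = z := by linear_combination h
  rw [this] at h1; exact absurd h1 (by linarith)

lemma cont_inv_sub (z : ℂ) (hz : ‖z‖ < 1) :
    Continuous (fun τ : ℝ => (Complex.exp (τ * Complex.I) - z)⁻¹) := by
  apply Continuous.inv₀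
  · exact (Complex.continuous_exp.comp (by continuity)).sub continuous_const
  · exact fun τ => exp_tau_ne z hz τ

lemma integral_inv_sub_eq_zero (z : ℂ) (hz : ‖z‖ < 1) (hz0 : z ≠ 0) :
    ∫ τ in (0:ℝ)..(2*π), (Complex.exp (τ * Complex.I) - z)⁻¹ = 0 := by
  have hmem : z ∈ ball (0:ℂ) 1 := by simpa using hz
  have h2 := circleIntegral.integral_sub_inv_of_mem_ball hmem
  rw [circleIntegral] at h2
  have hrw : ∀ τ : ℝ, deriv (circleMap 0 1) τ • (circleMap 0 1 τ - z)⁻¹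
      = Complex.I + (Complex.I * z) * (Complex.exp (τ * Complex.I) - z)⁻¹ := by
    intro τ
    rw [deriv_circleMap, circleMap_zero]
    simp only [Complex.ofReal_one, one_mul, smul_eq_mul]
    have hne := exp_tau_ne z hz τ
    field_simp
    ring
  rw [intervalIntegral.integral_congr (fun τ _ => hrw τ)] at h2
  have hint : IntervalIntegrable (fun τ : ℝ => (Complex.I * z) * (Complex.exp (τ * Complex.I) - z)⁻¹)
      MeasureTheory.volume 0 (2*π) :=
    (continuous_const.mul (cont_inv_sub z hz)).intervalIntegrable _ _
  rw [intervalIntegral.integral_add (intervalIntegrable_const) hint,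
    intervalIntegral.integral_const, intervalIntegral.integral_const_mul,
    sub_zero, Complex.real_smul] at h2
  push_cast at h2
  have h3 : (Complex.I * z) * (∫ τ in (0:ℝ)..(2*π), (Complex.exp (τ * Complex.I) - z)⁻¹) = 0 := by
    linear_combination h2
  rcases mul_eq_zero.1 h3 with h | h
  · exact absurd h (mul_ne_zero Complex.I_ne_zero hz0)
  · exact h

lemma re_frac (z w : ℂ) (hw : ‖w‖ = 1) (hwz : w - z ≠ 0) :
    ((w + z) / (w - z)).re = (1 - ‖z‖^2) / ‖w - z‖^2 := by
  have hns : Complex.normSq (w - z) ≠ 0 := by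
    simpa [Complex.normSq_eq_zero] using hwz
  have h1 : ‖w - z‖^2 = Complex.normSq (w - z) := by
    exact Complex.sq_norm _
  have h3 : w.re^2 + w.im^2 = 1 := by
    have := nsq w; rw [hw] at this; nlinarith
  rw [Complex.div_re, h1, nsq z, Complex.normSq_apply]
  simp only [Complex.add_re, Complex.add_im, Complex.sub_re, Complex.sub_im]
  rw [← add_div]
  congr 1
  nlinarith [h3]

lemma kernel_integral (z : ℂ) (hz : ‖z‖ < 1) (hz0 : z ≠ 0) :
    ∫ τ in (0:ℝ)..(2*π), (1 - ‖z‖^2) / ‖Complex.exp (τ * Complex.I) - z‖^2 = 2*π := by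
  have key : ∫ τ in (0:ℝ)..(2*π),
      (Complex.exp (τ * Complex.I) + z) / (Complex.exp (τ * Complex.I) - z) = 2*π := by
    have hrw : ∀ τ : ℝ, (Complex.exp (τ * Complex.I) + z) / (Complex.exp (τ * Complex.I) - z)
        = 1 + (2*z) * (Complex.exp (τ * Complex.I) - z)⁻¹ := by
      intro τ
      have hne := exp_tau_ne z hz τ
      field_simp
      ring
    rw [intervalIntegral.integral_congr (fun τ _ => hrw τ),
      intervalIntegral.integral_add
        (g := fun τ : ℝ => (2*z) * (Complex.exp (τ * Complex.I) - z)⁻¹) intervalIntegrable_const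
        ((continuous_const.mul (cont_inv_sub z hz)).intervalIntegrable _ _),
      intervalIntegral.integral_const, intervalIntegral.integral_const_mul,
      integral_inv_sub_eq_zero z hz hz0]
    push_cast [Complex.real_smul]
    ring
  have hcont : Continuous (fun τ : ℝ =>
      (Complex.exp (τ * Complex.I) + z) / (Complex.exp (τ * Complex.I) - z)) := by
    apply Continuous.div
    · exact (Complex.continuous_exp.comp (by continuity)).add continuous_const
    · exact (Complex.continuous_exp.comp (by continuity)).sub continuous_const
    · exact fun τ => exp_tau_ne z hz τ
  have hre := Complex.reCLM.intervalIntegral_comp_comm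
    (f := fun τ : ℝ => (Complex.exp (τ * Complex.I) + z) / (Complex.exp (τ * Complex.I) - z))
    (μ := MeasureTheory.volume) (a := 0) (b := 2*π)
    (hcont.intervalIntegrable 0 (2*π))
  have hcongr : ∀ τ ∈ Set.uIcc (0:ℝ) (2*π), (1 - ‖z‖^2) / ‖Complex.exp (τ * Complex.I) - z‖^2
      = ((Complex.exp (τ * Complex.I) + z) / (Complex.exp (τ * Complex.I) - z)).re := by
    intro τ _
    rw [re_frac z _ (by simpa using Complex.abs_exp_ofReal_mul_I τ) (exp_tau_ne z hz τ)]
  rw [intervalIntegral.integral_congr hcongr]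
  have : (fun τ : ℝ => ((Complex.exp (τ * Complex.I) + z) / (Complex.exp (τ * Complex.I) - z)).re)
      = fun τ : ℝ => Complex.reCLM ((Complex.exp (τ * Complex.I) + z) / (Complex.exp (τ * Complex.I) - z)) := rfl
  rw [this, hre, key]
  simp



lemma sq_le_imp {a b : ℝ} (ha : 0 ≤ a) (hb : 0 ≤ b) (h : a^2 ≤ b^2) : a ≤ b := by
  nlinarith

lemma sq_eq_imp {a b : ℝ} (ha : 0 ≤ a) (hb : 0 ≤ b) (h : a^2 = b^2) : a = b := by
  nlinarith

lemma norm_exp_sub_real_sq (r t : ℝ) :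
    ‖Complex.exp (t*Complex.I) - (r:ℂ)‖^2 = 1 - 2*r*Real.cos t + r^2 := by
  rw [nsq]
  simp only [Complex.sub_re, Complex.sub_im, Complex.exp_ofReal_mul_I_re,
    Complex.exp_ofReal_mul_I_im, Complex.ofReal_re, Complex.ofReal_im]
  nlinarith [Real.sin_sq_add_cos_sq t]

lemma norm_one_sub_exp_sq (t : ℝ) :
    ‖(1:ℂ) - Complex.exp (t*Complex.I)‖^2 = 2 - 2*Real.cos t := by
  rw [norm_sub_rev]
  have := norm_exp_sub_real_sq 1 t
  push_cast at this
  rw [this]; ring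

lemma norm_one_sub_exp_le (t : ℝ) : ‖(1:ℂ) - Complex.exp (t*Complex.I)‖ ≤ |t| := by
  apply sq_le_imp (norm_nonneg _) (abs_nonneg _)
  rw [norm_one_sub_exp_sq, sq_abs]
  nlinarith [Real.one_sub_sq_div_two_le_cos (x := t)]

lemma norm_exp_sub_real_even (r t : ℝ) :
    ‖Complex.exp ((-t)*Complex.I) - (r:ℂ)‖ = ‖Complex.exp (t*Complex.I) - (r:ℂ)‖ := by
  apply sq_eq_imp (norm_nonneg _) (norm_nonneg _)
  have h1 := norm_exp_sub_real_sq r (-t)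
  push_cast at h1
  rw [h1, norm_exp_sub_real_sq, Real.cos_neg]

lemma norm_one_sub_exp_even (t : ℝ) :
    ‖(1:ℂ) - Complex.exp ((-t)*Complex.I)‖ = ‖(1:ℂ) - Complex.exp (t*Complex.I)‖ := by
  apply sq_eq_imp (norm_nonneg _) (norm_nonneg _)
  have h1 := norm_one_sub_exp_sq (-t)
  push_cast at h1
  rw [h1, norm_one_sub_exp_sq, Real.cos_neg]

lemma exp_periodic2 : ∀ t : ℝ, Complex.exp ((t + 2*π : ℝ)*Complex.I) = Complex.exp (t*Complex.I) := by
  intro t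
  push_cast
  rw [add_mul, Complex.exp_add, Complex.exp_two_pi_mul_I, mul_one]

lemma kernel_lb (r t : ℝ) (hr0 : 0 < r) (hr1 : r < 1) (ht0 : 0 ≤ t) (htπ : t ≤ π) :
    t^2/(4*π^2) ≤ ‖Complex.exp (t*Complex.I) - (r:ℂ)‖^2 := by
  rw [norm_exp_sub_real_sq]
  have hcos := Real.cos_le_one_sub_mul_cos_sq (x := t) (by rwa [abs_of_nonneg ht0])
  have hπ := Real.pi_pos
  rw [div_le_iff₀ (by positivity)]
  have hc2 : π^2 * Real.cos t ≤ π^2 - 2*t^2 := by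
    have := mul_le_mul_of_nonneg_left hcos (le_of_lt (by positivity : (0:ℝ) < π^2))
    rw [mul_sub] at this
    calc π^2 * Real.cos t ≤ π^2 * 1 - π^2 * (2/π^2*t^2) := this
      _ = π^2 - 2*t^2 := by field_simp
  nlinarith [sq_nonneg (2*r - 1), sq_nonneg (1 - r), mul_le_mul_of_nonneg_left hc2 hr0.le,
    mul_nonneg hr0.le (sq_nonneg t), sq_nonneg t, mul_le_mul_of_nonneg_left (mul_le_mul htπ htπ ht0 (le_of_lt hπ)) hr0.le]

noncomputable def Kr (r : ℝ) : ℝ → ℝ :=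
  fun t => (1 - r^2) / ‖Complex.exp (t*Complex.I) - (r:ℂ)‖^2

noncomputable def gg (L : ℝ) (ω : ℝ → ℝ) (r : ℝ) : ℝ → ℝ :=
  fun t => Kr r t * (L * ω ‖(1:ℂ) - Complex.exp (t*Complex.I)‖)

lemma core (M L : ℝ) (hM : 0 < M) (hL : 0 < L) (ω : ℝ → ℝ) (φ : ℂ → ℂ)
    (hω : IsMajorant ω)
    (hdini : ∀ δ : ℝ, 0 < δ → δ ≤ π → δ * ∫ t in δ..π, ω t / t ^ 2 ≤ M * ω δ)
    (hφc : ContinuousOn φ (sphere (0:ℂ) 1))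
    (hmod : ∀ ξ₁ ∈ sphere (0:ℂ) 1, ∀ ξ₂ ∈ sphere (0:ℂ) 1,
      ‖φ ξ₁ - φ ξ₂‖ ≤ L * ω ‖ξ₁ - ξ₂‖)
    (r : ℝ) (hr0 : 0 < r) (hr1 : r < 1) :
    ‖φ 1 - poissonC φ (r:ℂ)‖ ≤ (8*π*L*M + L) * ω (1 - r) := by
  obtain ⟨hωc, hωm, hω0, hωd⟩ := hω
  have hπ := Real.pi_pos
  have hπ3 := Real.pi_gt_three
  set δ := 1 - r with hδdef
  have hδ0 : 0 < δ := by simp only [hδdef]; linarith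
  have hδπ : δ ≤ π := by simp only [hδdef]; linarith
  have hωnn : ∀ x, 0 ≤ x → 0 ≤ ω x := by
    intro x hx
    have := hωm (Set.mem_Ici.2 le_rfl) (Set.mem_Ici.2 hx) hx
    rwa [hω0] at this
  have hrne : (r:ℂ) ≠ 0 := Complex.ofReal_ne_zero.2 hr0.ne'
  have hrn : ‖(r:ℂ)‖ = r := by
    rw [Complex.norm_of_nonneg hr0.le]
  have hrb : ‖(r:ℂ)‖ < 1 := by rw [hrn]; exact hr1
  have hexpne : ∀ t : ℝ, Complex.exp (t*Complex.I) - (r:ℂ) ≠ 0 := fun t => exp_tau_ne _ hrb t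
  have hecont : Continuous (fun t : ℝ => Complex.exp ((t:ℂ)*Complex.I)) :=
    Complex.continuous_exp.comp (Complex.continuous_ofReal.mul continuous_const)
  have hesph : ∀ t : ℝ, Complex.exp ((t:ℂ)*Complex.I) ∈ sphere (0:ℂ) 1 := by
    intro t
    simp [Complex.norm_exp_ofReal_mul_I]
  have hφec : Continuous (fun t : ℝ => φ (Complex.exp ((t:ℂ)*Complex.I))) :=
    hφc.comp_continuous hecont hesph
  have hKcont : Continuous (Kr r) := by
    apply continuous_const.div ((hecont.sub continuous_const).norm.pow 2)
    exact fun t => pow_ne_zero 2 (norm_ne_zero_iff.2 (hexpne t))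
  have hKnn : ∀ t, 0 ≤ Kr r t := by
    intro t
    apply div_nonneg (by nlinarith) (sq_nonneg _)
  have hgcont : Continuous (gg L ω r) := by
    apply hKcont.mul
    apply continuous_const.mul
    exact hωc.comp_continuous ((continuous_const.sub hecont).norm)
      (fun t => Set.mem_Ici.2 (norm_nonneg _))
  have hKint : ∫ t in (0:ℝ)..(2*π), Kr r t = 2*π := by
    have h := kernel_integral (r:ℂ) hrb hrne
    rw [hrn] at h
    simpa only [Kr] using h
  -- identity
  have hint1 : IntervalIntegrable (fun t:ℝ => Kr r t • φ 1) MeasureTheory.volume 0 (2*π) :=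
    (hKcont.smul continuous_const).intervalIntegrable _ _
  have hint2 : IntervalIntegrable (fun t:ℝ => Kr r t • φ (Complex.exp ((t:ℂ)*Complex.I)))
      MeasureTheory.volume 0 (2*π) :=
    (hKcont.smul hφec).intervalIntegrable _ _
  have hiden : φ 1 - poissonC φ (r:ℂ)
      = (1/(2*π) : ℝ) • ∫ t in (0:ℝ)..(2*π), Kr r t • (φ 1 - φ (Complex.exp ((t:ℂ)*Complex.I))) := by
    rw [intervalIntegral.integral_congr
        (g := fun t:ℝ => Kr r t • φ 1 - Kr r t • φ (Complex.exp ((t:ℂ)*Complex.I)))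
        (fun t _ => smul_sub _ _ _),
      intervalIntegral.integral_sub hint1 hint2, intervalIntegral.integral_smul_const, hKint,
      smul_sub, smul_smul]
    rw [show (1/(2*π)) * (2*π) = (1:ℝ) by field_simp, one_smul, poissonC]
    congr 2
    apply intervalIntegral.integral_congr
    intro τ _
    simp only [Kr, hrn]
  -- norm bound
  have hb1 : ‖∫ t in (0:ℝ)..(2*π), Kr r t • (φ 1 - φ (Complex.exp ((t:ℂ)*Complex.I)))‖
      ≤ ∫ t in (0:ℝ)..(2*π), gg L ω r t := by
    calc ‖∫ t in (0:ℝ)..(2*π), Kr r t • (φ 1 - φ (Complex.exp ((t:ℂ)*Complex.I)))‖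
        ≤ ∫ t in (0:ℝ)..(2*π), ‖Kr r t • (φ 1 - φ (Complex.exp ((t:ℂ)*Complex.I)))‖ :=
          intervalIntegral.norm_integral_le_integral_norm (by positivity)
      _ ≤ ∫ t in (0:ℝ)..(2*π), gg L ω r t := by
          apply intervalIntegral.integral_mono_on (by positivity)
            ((hKcont.smul (continuous_const.sub hφec)).norm.intervalIntegrable _ _)
            (hgcont.intervalIntegrable _ _)
          intro t _
          show ‖Kr r t • (φ 1 - φ (Complex.exp ((t:ℂ)*Complex.I)))‖ ≤ gg L ω r t
          rw [norm_smul, Real.norm_eq_abs, abs_of_nonneg (hKnn t)]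
          exact mul_le_mul_of_nonneg_left
            (hmod 1 (by simp) _ (hesph t)) (hKnn t)
  -- periodicity and shift
  have hKper : Function.Periodic (Kr r) (2*π) := by
    intro t; simp only [Kr]; rw [exp_periodic2]
  have hgper : Function.Periodic (gg L ω r) (2*π) := by
    intro t; simp only [gg, Kr]; rw [exp_periodic2]
  have hshift : ∀ f : ℝ → ℝ, Function.Periodic f (2*π) →
      ∫ t in (0:ℝ)..(2*π), f t = ∫ t in (-π)..π, f t := by
    intro f hf
    have h := hf.intervalIntegral_add_eq 0 (-π)
    rw [zero_add, show -π + 2*π = π by ring] at h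
    exact h
  -- splitting
  have hsplit : ∀ f : ℝ → ℝ, Continuous f →
      ∫ t in (-π)..(π:ℝ), f t
        = (∫ t in (-π)..(-δ), f t) + (∫ t in (-δ)..δ, f t) + ∫ t in δ..(π:ℝ), f t := by
    intro f hf
    have h1 := intervalIntegral.integral_add_adjacent_intervals (a := -π) (b := -δ) (c := δ)
      (f := f) (μ := MeasureTheory.volume) (hf.intervalIntegrable _ _) (hf.intervalIntegrable _ _)
    have h2 := intervalIntegral.integral_add_adjacent_intervals (a := -π) (b := δ) (c := π)
      (f := f) (μ := MeasureTheory.volume) (hf.intervalIntegrable _ _) (hf.intervalIntegrable _ _)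
    rw [h1, h2]
  -- evenness
  have hgeven : ∀ t, gg L ω r (-t) = gg L ω r t := by
    intro t
    simp only [gg, Kr]
    push_cast
    rw [norm_exp_sub_real_even, norm_one_sub_exp_even]
  have hleft : ∫ t in (-π)..(-δ), gg L ω r t = ∫ t in δ..π, gg L ω r t := by
    rw [show ∫ t in δ..π, gg L ω r t = ∫ t in δ..π, gg L ω r (-t) from
        intervalIntegral.integral_congr (fun t _ => (hgeven t).symm),
      intervalIntegral.integral_comp_neg]
  -- right piece
  have hωint : IntervalIntegrable (fun t => ω t / t^2) MeasureTheory.volume δ π := by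
    apply ContinuousOn.intervalIntegrable
    apply ContinuousOn.div
    · apply hωc.mono
      intro x hx
      rw [Set.uIcc_of_le hδπ] at hx
      exact Set.mem_Ici.2 (le_trans hδ0.le hx.1)
    · exact (continuous_pow 2).continuousOn
    · intro x hx
      rw [Set.uIcc_of_le hδπ] at hx
      have : 0 < x := lt_of_lt_of_le hδ0 hx.1
      positivity
  have hptright : ∀ t ∈ Set.Icc δ π, gg L ω r t ≤ (8*π^2*L*δ) * (ω t / t^2) := by
    intro t ht
    have ht0 : 0 < t := lt_of_lt_of_le hδ0 ht.1
    have hD := kernel_lb r t hr0 hr1 ht0.le ht.2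
    have hKle : Kr r t ≤ 8*π^2*δ/t^2 := by
      simp only [Kr]
      have h1 : 1 - r^2 ≤ 2*δ := by simp only [hδdef]; nlinarith
      calc (1-r^2)/‖Complex.exp ((t:ℂ)*Complex.I) - (r:ℂ)‖^2
          ≤ (2*δ)/(t^2/(4*π^2)) := div_le_div₀ (by positivity) h1 (by positivity) hD
        _ = 8*π^2*δ/t^2 := by field_simp; ring
    have hω1 : ω ‖(1:ℂ) - Complex.exp ((t:ℂ)*Complex.I)‖ ≤ ω t :=
      hωm (Set.mem_Ici.2 (norm_nonneg _)) (Set.mem_Ici.2 ht0.le)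
        (le_trans (norm_one_sub_exp_le t) (le_of_eq (abs_of_pos ht0)))
    calc gg L ω r t
        ≤ (8*π^2*δ/t^2) * (L * ω t) := by
          apply mul_le_mul hKle (mul_le_mul_of_nonneg_left hω1 hL.le)
            (mul_nonneg hL.le (hωnn _ (norm_nonneg _))) (by positivity)
      _ = (8*π^2*L*δ) * (ω t / t^2) := by field_simp
  have hright : ∫ t in δ..π, gg L ω r t ≤ (8*π^2*L) * (M * ω δ) := by
    calc ∫ t in δ..π, gg L ω r t
        ≤ ∫ t in δ..π, (8*π^2*L*δ) * (ω t / t^2) :=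
          intervalIntegral.integral_mono_on hδπ (hgcont.intervalIntegrable _ _)
            (hωint.const_mul _) hptright
      _ = (8*π^2*L) * (δ * ∫ t in δ..π, ω t / t^2) := by
          rw [intervalIntegral.integral_const_mul]; ring
      _ ≤ (8*π^2*L) * (M * ω δ) :=
          mul_le_mul_of_nonneg_left (hdini δ hδ0 hδπ) (by positivity)
  -- middle piece
  have hKmid : ∫ t in (-δ)..δ, Kr r t ≤ 2*π := by
    have hK2 : ∫ t in (-π)..π, Kr r t = 2*π := by rw [← hshift _ hKper]; exact hKint
    have e1 : 0 ≤ ∫ t in (-π)..(-δ), Kr r t :=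
      intervalIntegral.integral_nonneg (by linarith) (fun u _ => hKnn u)
    have e2 : 0 ≤ ∫ t in δ..π, Kr r t :=
      intervalIntegral.integral_nonneg hδπ (fun u _ => hKnn u)
    have := hsplit _ hKcont
    rw [hK2] at this
    linarith
  have hptmid : ∀ t ∈ Set.Icc (-δ) δ, gg L ω r t ≤ (L * ω δ) * Kr r t := by
    intro t ht
    have habs : |t| ≤ δ := abs_le.2 ⟨ht.1, ht.2⟩
    have hω1 : ω ‖(1:ℂ) - Complex.exp ((t:ℂ)*Complex.I)‖ ≤ ω δ :=
      hωm (Set.mem_Ici.2 (norm_nonneg _)) (Set.mem_Ici.2 hδ0.le)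
        (le_trans (norm_one_sub_exp_le t) habs)
    calc gg L ω r t
        ≤ Kr r t * (L * ω δ) :=
          mul_le_mul_of_nonneg_left (mul_le_mul_of_nonneg_left hω1 hL.le) (hKnn t)
      _ = (L * ω δ) * Kr r t := mul_comm _ _
  have hmid : ∫ t in (-δ)..δ, gg L ω r t ≤ (L * ω δ) * (2*π) := by
    calc ∫ t in (-δ)..δ, gg L ω r t
        ≤ ∫ t in (-δ)..δ, (L * ω δ) * Kr r t :=
          intervalIntegral.integral_mono_on (by linarith) (hgcont.intervalIntegrable _ _)
            ((continuous_const.mul hKcont).intervalIntegrable _ _) hptmid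
      _ = (L * ω δ) * ∫ t in (-δ)..δ, Kr r t := intervalIntegral.integral_const_mul _ _
      _ ≤ (L * ω δ) * (2*π) :=
          mul_le_mul_of_nonneg_left hKmid (mul_nonneg hL.le (hωnn δ hδ0.le))
  -- total
  have htot : ∫ t in (0:ℝ)..(2*π), gg L ω r t ≤ 16*π^2*L*M*(ω δ) + 2*π*L*(ω δ) := by
    rw [hshift _ hgper, hsplit _ hgcont, hleft]
    nlinarith [hright, hmid]
  rw [hiden, norm_smul, Real.norm_eq_abs, abs_of_pos (by positivity : (0:ℝ) < 1/(2*π))]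
  calc (1/(2*π)) * ‖∫ t in (0:ℝ)..(2*π), Kr r t • (φ 1 - φ (Complex.exp ((t:ℂ)*Complex.I)))‖
      ≤ (1/(2*π)) * ∫ t in (0:ℝ)..(2*π), gg L ω r t :=
        mul_le_mul_of_nonneg_left hb1 (by positivity)
    _ ≤ (1/(2*π)) * (16*π^2*L*M*(ω δ) + 2*π*L*(ω δ)) :=
        mul_le_mul_of_nonneg_left htot (by positivity)
    _ = (8*π*L*M + L) * ω δ := by field_simp; ring


theorem stmt13 (M L : ℝ) (hM : 0 < M) (hL : 0 < L) :
    ∃ M' > (0:ℝ), ∀ (ω : ℝ → ℝ) (φ : ℂ → ℂ), IsMajorant ω →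
      (∀ δ : ℝ, 0 < δ → δ ≤ π → δ * ∫ t in δ..π, ω t / t ^ 2 ≤ M * ω δ) →
      ContinuousOn φ (sphere (0:ℂ) 1) →
      (∀ ξ₁ ∈ sphere (0:ℂ) 1, ∀ ξ₂ ∈ sphere (0:ℂ) 1,
        ‖φ ξ₁ - φ ξ₂‖ ≤ L * ω ‖ξ₁ - ξ₂‖) →
      ∀ z ∈ ball (0:ℂ) 1, z ≠ 0 →
        ‖φ (z / (‖z‖ : ℂ)) - poissonC φ z‖ ≤ M' * ω (1 - ‖z‖) := by
  have hπ := Real.pi_pos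
  refine ⟨8*π*L*M + L + 1, by positivity, ?_⟩
  intro ω φ hω hdini hφc hmod z hz hz0
  have hr1 : ‖z‖ < 1 := by simpa using hz
  have hr0 : 0 < ‖z‖ := norm_pos_iff.2 hz0
  set r := ‖z‖ with hrdef
  set θ := Complex.arg z with hθdef
  set ξ := Complex.exp ((θ:ℂ) * Complex.I) with hξdef
  have hξz : (r:ℂ) * ξ = z := by
    rw [hξdef, hθdef, hrdef]
    exact Complex.norm_mul_exp_arg_mul_I z
  have hξn : ‖ξ‖ = 1 := by
    rw [hξdef]
    exact Complex.norm_exp_ofReal_mul_I θ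
  have hrn : ‖(r:ℂ)‖ = r := by
    rw [Complex.norm_of_nonneg hr0.le]
  have hrne : (r:ℂ) ≠ 0 := Complex.ofReal_ne_zero.2 hr0.ne'
  have hzdiv : z / (r:ℂ) = ξ := by
    rw [← hξz]; field_simp
  set ψ : ℂ → ℂ := fun w => φ (ξ * w) with hψdef
  have hsphmap : ∀ w : ℂ, w ∈ sphere (0:ℂ) 1 → ξ * w ∈ sphere (0:ℂ) 1 := by
    intro w hw
    rw [mem_sphere_zero_iff_norm] at hw ⊢
    rw [norm_mul, hξn, one_mul, hw]
  have hψc : ContinuousOn ψ (sphere (0:ℂ) 1) := by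
    apply hφc.comp (Continuous.continuousOn (continuous_const.mul continuous_id))
    intro w hw
    exact hsphmap w hw
  have hψmod : ∀ ξ₁ ∈ sphere (0:ℂ) 1, ∀ ξ₂ ∈ sphere (0:ℂ) 1,
      ‖ψ ξ₁ - ψ ξ₂‖ ≤ L * ω ‖ξ₁ - ξ₂‖ := by
    intro ξ₁ h1 ξ₂ h2
    have h := hmod (ξ*ξ₁) (hsphmap _ h1) (ξ*ξ₂) (hsphmap _ h2)
    rw [← mul_sub, norm_mul, hξn, one_mul] at h
    exact h
  have hpois : poissonC φ z = poissonC ψ (r:ℂ) := by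
    rw [poissonC, poissonC]
    congr 1
    have hper : Function.Periodic (fun τ : ℝ =>
        ((1 - ‖z‖^2)/‖Complex.exp ((τ:ℂ)*Complex.I) - z‖^2 : ℝ) •
          φ (Complex.exp ((τ:ℂ)*Complex.I))) (2*π) := by
      intro t
      simp only
      rw [exp_periodic2]
    have h1 := hper.intervalIntegral_add_eq 0 θ
    rw [zero_add] at h1
    have h2 := intervalIntegral.integral_comp_add_left (a := (0:ℝ)) (b := 2*π)
      (f := fun τ : ℝ => ((1 - ‖z‖^2)/‖Complex.exp ((τ:ℂ)*Complex.I) - z‖^2 : ℝ) •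
        φ (Complex.exp ((τ:ℂ)*Complex.I))) θ
    rw [add_zero] at h2
    rw [h1, ← h2]
    apply intervalIntegral.integral_congr
    intro t _
    have hexp : Complex.exp ((↑(θ + t))*Complex.I) = ξ * Complex.exp ((t:ℂ)*Complex.I) := by
      push_cast
      rw [add_mul, Complex.exp_add, hξdef]
    simp only
    rw [hexp]
    have hnorm : ‖ξ * Complex.exp ((t:ℂ)*Complex.I) - z‖
        = ‖Complex.exp ((t:ℂ)*Complex.I) - (r:ℂ)‖ := by
      rw [← hξz, show ξ * Complex.exp ((t:ℂ)*Complex.I) - (r:ℂ) * ξ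
          = ξ * (Complex.exp ((t:ℂ)*Complex.I) - (r:ℂ)) by ring,
        norm_mul, hξn, one_mul]
    rw [hnorm, hrn]
  have hψ1 : φ (z / (r:ℂ)) = ψ 1 := by
    rw [hzdiv, hψdef]
    simp
  rw [hψ1, hpois]
  have hcore := core M L hM hL ω ψ hω hdini hψc hψmod r hr0 hr1
  have hωnn : 0 ≤ ω (1 - r) := by
    obtain ⟨hωc, hωm, hω0, hωd⟩ := hω
    have := hωm (Set.mem_Ici.2 le_rfl) (Set.mem_Ici.2 (by linarith : (0:ℝ) ≤ 1 - r)) (by linarith)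
    rwa [hω0] at this
  calc ‖ψ 1 - poissonC ψ (r:ℂ)‖ ≤ (8*π*L*M + L) * ω (1 - r) := hcore
    _ ≤ (8*π*L*M + L + 1) * ω (1 - r) := by nlinarith
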